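/- For any matrices X and Y in R^{s×t}, the inner product ⟨X, Y⟩ = trace(XᵀY) satisfies ⟨X, Y⟩ ≤ Σ_{i=1}^{min(s,t)} σ_i(X) σ_i(Y), where σ_i denotes the i-th largest singular value. -/

import Mathlib

open Matrix

/-- The singular values of a real `s × t` matrix, indexed by `Fin t`
(square roots of the eigenvalues of `Xᴴ * X`). -/
noncomputable def svals {s t : ℕ} (X : Matrix (Fin s) (Fin t) ℝ) : Fin t → ℝ :=
  fun k => Real.sqrt ((Matrix.isHermitian_conjTranspose_mul_self X).eigenvalues k)

/-- The singular values sorted in decreasing order: `sdesc X i` is the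
`(i+1)`-th largest singular value of `X`. -/
noncomputable def sdesc {s t : ℕ} (X : Matrix (Fin s) (Fin t) ℝ) : Fin t → ℝ :=
  fun i => svals X (Tuple.sort (svals X) i.rev)

section Aux
open Finset

/-- Swap a triangular double sum. -/
lemma vn_swap_tri (n : ℕ) (g : ℕ → ℕ → ℝ) :
    ∑ j ∈ range n, ∑ k ∈ Finset.Ico j n, g j k
      = ∑ k ∈ range n, ∑ j ∈ range (k+1), g j k := by
  have h1 : ∀ j : ℕ, Finset.Ico j n = (range n).filter (fun k => j ≤ k) := by
    intro j; ext k; simp [Finset.mem_Ico]; omega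
  have h2 : ∀ k, k < n → range (k+1) = (range n).filter (fun j => j ≤ k) := by
    intro k hk; ext j; simp; omega
  calc ∑ j ∈ range n, ∑ k ∈ Finset.Ico j n, g j k
      = ∑ j ∈ range n, ∑ k ∈ range n, if j ≤ k then g j k else 0 := by
        refine Finset.sum_congr rfl fun j _ => ?_
        rw [h1 j, Finset.sum_filter]
    _ = ∑ k ∈ range n, ∑ j ∈ range n, if j ≤ k then g j k else 0 := Finset.sum_comm
    _ = ∑ k ∈ range n, ∑ j ∈ range (k+1), g j k := by
        refine Finset.sum_congr rfl fun k hk => ?_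
        rw [h2 k (mem_range.1 hk), Finset.sum_filter]

/-- Abel-summation expansion of a weighted double sum. -/
lemma vn_expand (n : ℕ) (a b : ℕ → ℝ) (D : ℕ → ℕ → ℝ)
    (hA : ∀ j < n, a j = a n + ∑ k ∈ Finset.Ico j n, (a k - a (k+1)))
    (hB : ∀ l < n, b l = b n + ∑ k ∈ Finset.Ico l n, (b k - b (k+1))) :
    ∑ j ∈ range n, ∑ l ∈ range n, a j * b l * D j l
      = a n * b n * (∑ j ∈ range n, ∑ l ∈ range n, D j l)
        + a n * (∑ l ∈ range n, (∑ k ∈ Finset.Ico l n, (b k - b (k+1)))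
            * (∑ j ∈ range n, D j l))
        + b n * (∑ j ∈ range n, (∑ k ∈ Finset.Ico j n, (a k - a (k+1)))
            * (∑ l ∈ range n, D j l))
        + ∑ k ∈ range n, ∑ k' ∈ range n, (a k - a (k+1)) * (b k' - b (k'+1))
            * (∑ l ∈ range (k'+1), ∑ j ∈ range (k+1), D j l) := by
  set α : ℕ → ℝ := fun k => a k - a (k+1) with hα
  set β : ℕ → ℝ := fun k => b k - b (k+1) with hβ
  set A : ℕ → ℝ := fun j => ∑ k ∈ Finset.Ico j n, α k with hAd
  set B : ℕ → ℝ := fun j => ∑ k ∈ Finset.Ico j n, β k with hBd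
  have step1 : ∑ j ∈ range n, ∑ l ∈ range n, a j * b l * D j l
      = ∑ j ∈ range n, ∑ l ∈ range n,
          (a n * b n * D j l + a n * (B l * D j l) + b n * (A j * D j l)
            + A j * (B l * D j l)) := by
    refine Finset.sum_congr rfl fun j hj => Finset.sum_congr rfl fun l hl => ?_
    rw [hA j (mem_range.1 hj), hB l (mem_range.1 hl)]
    ring
  rw [step1]
  simp only [Finset.sum_add_distrib]
  congr 1
  · congr 1
    · congr 1
      · -- T1
        simp [Finset.mul_sum]
      · -- T2
        rw [Finset.sum_comm, Finset.mul_sum]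
        refine Finset.sum_congr rfl fun l _ => ?_
        rw [← Finset.mul_sum, ← Finset.mul_sum]
    · -- T3
      rw [Finset.mul_sum]
      refine Finset.sum_congr rfl fun j _ => ?_
      rw [← Finset.mul_sum, ← Finset.mul_sum]
  · -- T4 : the Abel part
    have s1 : ∀ j, ∑ l ∈ range n, A j * (B l * D j l)
        = A j * ∑ l ∈ range n, B l * D j l := by
      intro j; rw [Finset.mul_sum]
    have s2 : ∑ j ∈ range n, A j * ∑ l ∈ range n, B l * D j l
        = ∑ k ∈ range n, α k * ∑ j ∈ range (k+1), ∑ l ∈ range n, B l * D j l := by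
      have : ∀ j, A j * ∑ l ∈ range n, B l * D j l
          = ∑ k ∈ Finset.Ico j n, α k * ∑ l ∈ range n, B l * D j l := by
        intro j; rw [hAd]; rw [Finset.sum_mul]
      simp only [this]
      rw [vn_swap_tri n (fun j k => α k * ∑ l ∈ range n, B l * D j l)]
      refine Finset.sum_congr rfl fun k _ => ?_
      rw [Finset.mul_sum]
    have s3 : ∀ k, ∑ j ∈ range (k+1), ∑ l ∈ range n, B l * D j l
        = ∑ k' ∈ range n, β k' * (∑ l ∈ range (k'+1), ∑ j ∈ range (k+1), D j l) := by
      intro k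
      rw [Finset.sum_comm]
      have : ∀ l, ∑ j ∈ range (k+1), B l * D j l
          = ∑ k' ∈ Finset.Ico l n, β k' * ∑ j ∈ range (k+1), D j l := by
        intro l
        rw [← Finset.mul_sum, hBd, Finset.sum_mul]
      simp only [this]
      rw [vn_swap_tri n (fun l k' => β k' * ∑ j ∈ range (k+1), D j l)]
      refine Finset.sum_congr rfl fun k' _ => ?_
      rw [Finset.mul_sum]
    calc ∑ j ∈ range n, ∑ l ∈ range n, A j * (B l * D j l)
        = ∑ j ∈ range n, A j * ∑ l ∈ range n, B l * D j l := by
          exact Finset.sum_congr rfl fun j _ => s1 j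
      _ = ∑ k ∈ range n, α k * ∑ j ∈ range (k+1), ∑ l ∈ range n, B l * D j l := s2
      _ = ∑ k ∈ range n, ∑ k' ∈ range n, α k * β k'
            * (∑ l ∈ range (k'+1), ∑ j ∈ range (k+1), D j l) := by
          refine Finset.sum_congr rfl fun k _ => ?_
          rw [s3 k, Finset.mul_sum]
          refine Finset.sum_congr rfl fun k' _ => ?_
          ring

/-- Core rearrangement bound for doubly substochastic weights. -/
lemma vn_core (n : ℕ) (a b : ℕ → ℝ) (D : ℕ → ℕ → ℝ)
    (ha : Antitone a) (hb : Antitone b) (ha0 : ∀ j, 0 ≤ a j) (hb0 : ∀ j, 0 ≤ b j)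
    (hD0 : ∀ j l, 0 ≤ D j l)
    (hrow : ∀ j, ∑ l ∈ range n, D j l ≤ 1)
    (hcol : ∀ l, ∑ j ∈ range n, D j l ≤ 1) :
    ∑ j ∈ range n, ∑ l ∈ range n, a j * b l * D j l
      ≤ ∑ j ∈ range n, a j * b j := by
  classical
  set α : ℕ → ℝ := fun k => a k - a (k+1) with hα
  set β : ℕ → ℝ := fun k => b k - b (k+1) with hβ
  have hα0 : ∀ k, 0 ≤ α k := fun k => sub_nonneg.2 (ha (Nat.le_succ k))
  have hβ0 : ∀ k, 0 ≤ β k := fun k => sub_nonneg.2 (hb (Nat.le_succ k))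
  have hA : ∀ j < n, a j = a n + ∑ k ∈ Finset.Ico j n, α k := by
    intro j hj
    have h1 : ∑ k ∈ Finset.Ico j n, α k = a j - a n := by
      rw [Finset.sum_Ico_eq_sum_range]
      have h3 : j + (n - j) = n := by omega
      have h2 := Finset.sum_range_sub' (fun i => a (j + i)) (n - j)
      rw [h3] at h2
      simpa [hα, Finset.sum_sub_distrib, add_assoc] using h2
    linarith
  have hB : ∀ l < n, b l = b n + ∑ k ∈ Finset.Ico l n, β k := by
    intro l hl
    have h1 : ∑ k ∈ Finset.Ico l n, β k = b l - b n := by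
      rw [Finset.sum_Ico_eq_sum_range]
      have h3 : l + (n - l) = n := by omega
      have h2 := Finset.sum_range_sub' (fun i => b (l + i)) (n - l)
      rw [h3] at h2
      simpa [hβ, Finset.sum_sub_distrib, add_assoc] using h2
    linarith
  -- identity weight
  set E : ℕ → ℕ → ℝ := fun j l => if j = l then 1 else 0 with hE
  have hRHS : ∑ j ∈ range n, a j * b j
      = ∑ j ∈ range n, ∑ l ∈ range n, a j * b l * E j l := by
    refine Finset.sum_congr rfl fun j hj => ?_
    rw [Finset.sum_eq_single j]
    · simp [hE]
    · intro l _ hne; simp [hE, Ne.symm hne]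
    · intro h; exact absurd hj h
  rw [hRHS, vn_expand n a b D hA hB, vn_expand n a b E hA hB]
  set A : ℕ → ℝ := fun j => ∑ k ∈ Finset.Ico j n, α k with hAd
  set B : ℕ → ℝ := fun j => ∑ k ∈ Finset.Ico j n, β k with hBd
  have hA0 : ∀ j, 0 ≤ A j := fun j => Finset.sum_nonneg fun k _ => hα0 k
  have hB0 : ∀ j, 0 ≤ B j := fun j => Finset.sum_nonneg fun k _ => hβ0 k
  have hEr : ∀ j ∈ range n, ∑ l ∈ range n, E j l = 1 := by
    intro j hj
    rw [Finset.sum_eq_single j]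
    · simp [hE]
    · intro l _ hne; simp only [hE]; exact if_neg (Ne.symm hne)
    · intro h; exact absurd hj h
  have hEc : ∀ l ∈ range n, ∑ j ∈ range n, E j l = 1 := by
    intro l hl
    rw [Finset.sum_eq_single l]
    · simp [hE]
    · intro m _ hne; simp only [hE]; exact if_neg hne
    · intro h; exact absurd hl h
  have hES : ∀ k k', ∑ l ∈ range (k'+1), ∑ j ∈ range (k+1), E j l
      = ((min k k' : ℕ) + 1 : ℝ) := by
    intro k k'
    have h1 : ∀ l, ∑ j ∈ range (k+1), E j l = if l ≤ k then 1 else 0 := by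
      intro l
      by_cases h : l ≤ k
      · rw [if_pos h, Finset.sum_eq_single l]
        · simp [hE]
        · intro m _ hne; simp only [hE]; exact if_neg hne
        · intro hl; exact absurd (Finset.mem_range.2 (by omega)) hl
      · rw [if_neg h]
        apply Finset.sum_eq_zero
        intro j hj
        simp only [hE]
        apply if_neg
        intro e
        rw [Finset.mem_range] at hj
        omega
    simp only [h1]
    have h2 : (range (k'+1)).filter (fun l => l ≤ k) = range (min k k' + 1) := by
      ext l; simp [Finset.mem_range]; omega
    rw [Finset.sum_ite, h2, Finset.sum_const, Finset.sum_const_zero, Finset.card_range]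
    push_cast
    simp
  have hDSbound : ∀ k ∈ range n, ∀ k' ∈ range n,
      ∑ l ∈ range (k'+1), ∑ j ∈ range (k+1), D j l ≤ ((min k k' : ℕ) + 1 : ℝ) := by
    intro k hk k' hk'
    rw [Finset.mem_range] at hk hk'
    have b1 : ∑ l ∈ range (k'+1), ∑ j ∈ range (k+1), D j l ≤ (k' + 1 : ℝ) := by
      calc ∑ l ∈ range (k'+1), ∑ j ∈ range (k+1), D j l
          ≤ ∑ l ∈ range (k'+1), (1:ℝ) := by
            refine Finset.sum_le_sum fun l _ => ?_
            calc ∑ j ∈ range (k+1), D j l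
                ≤ ∑ j ∈ range n, D j l :=
                  Finset.sum_le_sum_of_subset_of_nonneg
                    (Finset.range_subset_range.2 (by omega)) (fun j _ _ => hD0 j l)
              _ ≤ 1 := hcol l
        _ = (k' + 1 : ℝ) := by simp
    have b2 : ∑ l ∈ range (k'+1), ∑ j ∈ range (k+1), D j l ≤ (k + 1 : ℝ) := by
      rw [Finset.sum_comm]
      calc ∑ j ∈ range (k+1), ∑ l ∈ range (k'+1), D j l
          ≤ ∑ j ∈ range (k+1), (1:ℝ) := by
            refine Finset.sum_le_sum fun j _ => ?_
            calc ∑ l ∈ range (k'+1), D j l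
                ≤ ∑ l ∈ range n, D j l :=
                  Finset.sum_le_sum_of_subset_of_nonneg
                    (Finset.range_subset_range.2 (by omega)) (fun l _ _ => hD0 j l)
              _ ≤ 1 := hrow j
        _ = (k + 1 : ℝ) := by simp
    rcases le_total k k' with h | h
    · rw [min_eq_left h]; push_cast; linarith
    · rw [min_eq_right h]; push_cast; linarith
  refine add_le_add (add_le_add (add_le_add ?_ ?_) ?_) ?_
  · -- piece 1
    refine mul_le_mul_of_nonneg_left ?_ (mul_nonneg (ha0 n) (hb0 n))
    refine Finset.sum_le_sum fun j hj => ?_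
    rw [hEr j hj]
    exact hrow j
  · -- piece 2
    refine mul_le_mul_of_nonneg_left ?_ (ha0 n)
    refine Finset.sum_le_sum fun l hl => ?_
    rw [hEc l hl]
    rw [mul_one]
    calc (∑ k ∈ Finset.Ico l n, β k) * (∑ j ∈ range n, D j l)
        ≤ (∑ k ∈ Finset.Ico l n, β k) * 1 :=
          mul_le_mul_of_nonneg_left (hcol l) (hB0 l)
      _ = ∑ k ∈ Finset.Ico l n, β k := mul_one _
  · -- piece 3
    refine mul_le_mul_of_nonneg_left ?_ (hb0 n)
    refine Finset.sum_le_sum fun j hj => ?_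
    rw [hEr j hj, mul_one]
    calc (∑ k ∈ Finset.Ico j n, α k) * (∑ l ∈ range n, D j l)
        ≤ (∑ k ∈ Finset.Ico j n, α k) * 1 :=
          mul_le_mul_of_nonneg_left (hrow j) (hA0 j)
      _ = ∑ k ∈ Finset.Ico j n, α k := mul_one _
  · -- piece 4
    refine Finset.sum_le_sum fun k hk => Finset.sum_le_sum fun k' hk' => ?_
    rw [hES k k']
    exact mul_le_mul_of_nonneg_left (hDSbound k hk k' hk')
      (mul_nonneg (hα0 k) (hβ0 k'))

open Matrix in
lemma svd_decomp {s t : ℕ} (X : Matrix (Fin s) (Fin t) ℝ) :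
    ∃ (K : Matrix (Fin s) (Fin t) ℝ) (V : Matrix (Fin t) (Fin t) ℝ) (e : Fin t → ℝ),
      X = K * diagonal (svals X) * Vᵀ ∧ Kᵀ * K = diagonal e ∧
      K * diagonal e = K ∧ (∀ j, e j = 0 ∨ e j = 1) ∧
      (∀ j, svals X j ≠ 0 → e j = 1) ∧
      V * Vᵀ = 1 ∧ Vᵀ * V = 1 ∧
      (∑ j, e j) ≤ (s : ℝ) := by
  classical
  set hX := Matrix.isHermitian_conjTranspose_mul_self X with hXdef
  set lam : Fin t → ℝ := hX.eigenvalues with hlam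
  have hsv : ∀ j, svals X j = Real.sqrt (lam j) := fun j => rfl
  have hlam0 : ∀ j, 0 ≤ lam j := by
    have h : (Xᵀ * X).PosSemidef := by
      simpa using Matrix.posSemidef_conjTranspose_mul_self X
    exact fun j => h.eigenvalues_nonneg j
  set V : Matrix (Fin t) (Fin t) ℝ := (hX.eigenvectorUnitary : Matrix (Fin t) (Fin t) ℝ) with hV
  have hVmem := hX.eigenvectorUnitary.2
  have hVtV : Vᵀ * V = 1 := by
    have := (Matrix.mem_unitaryGroup_iff').mp hVmem
    rw [← Matrix.conjTranspose_eq_transpose_of_trivial V]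
    exact this
  have hVVt : V * Vᵀ = 1 := by
    have := (Matrix.mem_unitaryGroup_iff).mp hVmem
    rw [← Matrix.conjTranspose_eq_transpose_of_trivial V]
    exact this
  have hdiag : Vᵀ * (Xᵀ * X) * V = diagonal lam := by
    have := hX.conjStarAlgAut_star_eigenvectorUnitary
    rw [Unitary.conjStarAlgAut_star_apply] at this
    simp only [Function.comp_def, RCLike.ofReal_real_eq_id, id_eq] at this
    rw [← Matrix.conjTranspose_eq_transpose_of_trivial V, ← Matrix.conjTranspose_eq_transpose_of_trivial X]
    exact this
  set g : Fin t → ℝ := fun j => if lam j = 0 then 0 else (Real.sqrt (lam j))⁻¹ with hg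
  set e : Fin t → ℝ := fun j => if lam j = 0 then 0 else 1 with he
  set K : Matrix (Fin s) (Fin t) ℝ := X * V * diagonal g with hK
  have hsq : ∀ j, Real.sqrt (lam j) * Real.sqrt (lam j) = lam j :=
    fun j => Real.mul_self_sqrt (hlam0 j)
  have hKtK : Kᵀ * K = diagonal e := by
    rw [hK, Matrix.transpose_mul, Matrix.transpose_mul, Matrix.diagonal_transpose]
    have assoc : diagonal g * (Vᵀ * Xᵀ) * (X * V * diagonal g)
        = diagonal g * (Vᵀ * (Xᵀ * X) * V) * diagonal g := by simp only [Matrix.mul_assoc]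
    have hfun : (fun i => g i * lam i * g i) = e := by
      funext j
      by_cases h : lam j = 0
      · simp [hg, he, h]
      · have hpos : 0 < lam j := lt_of_le_of_ne (hlam0 j) (Ne.symm h)
        have hs : Real.sqrt (lam j) ≠ 0 := by positivity
        simp only [hg, he, if_neg h]
        rw [← hsq j]
        field_simp
        rw [Real.sqrt_sq (Real.sqrt_nonneg _)]
    rw [assoc, hdiag, Matrix.diagonal_mul_diagonal, Matrix.diagonal_mul_diagonal]
    exact congrArg Matrix.diagonal hfun
  have hge : (fun j => g j * e j) = g := by
    funext j
    by_cases h : lam j = 0 <;> simp [hg, he, h]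
  have hKe : K * diagonal e = K := by
    rw [hK, Matrix.mul_assoc (X * V), Matrix.diagonal_mul_diagonal, hge]
  have hXVcol : ∀ (i : Fin s) (j : Fin t), lam j = 0 → (X * V) i j = 0 := by
    intro i j h
    have h1 : ((X * V)ᵀ * (X * V)) j j = 0 := by
      rw [Matrix.transpose_mul, show Vᵀ * Xᵀ * (X * V) = Vᵀ * (Xᵀ * X) * V by
        simp only [Matrix.mul_assoc], hdiag]
      simp [h]
    have h2 : ((X * V)ᵀ * (X * V)) j j = ∑ i, ((X * V) i j)^2 := by
      rw [Matrix.mul_apply]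
      refine Finset.sum_congr rfl fun i _ => ?_
      rw [Matrix.transpose_apply, pow_two]
    rw [h2] at h1
    have := Finset.sum_eq_zero_iff_of_nonneg
      (fun i _ => sq_nonneg ((X * V) i j)) |>.mp h1 i (Finset.mem_univ i)
    exact pow_eq_zero_iff (n := 2) (by norm_num) |>.mp this
  have hXdecomp : X = K * diagonal (svals X) * Vᵀ := by
    have h1 : K * diagonal (svals X) = X * V := by
      rw [hK, Matrix.mul_assoc (X * V), Matrix.diagonal_mul_diagonal]
      ext i j
      rw [Matrix.mul_apply]
      rw [show ∀ M : Matrix (Fin t) (Fin t) ℝ, ∑ k, (X * V) i k * M k j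
          = ((X * V) * M) i j from fun M => (Matrix.mul_apply).symm]
      rw [Matrix.mul_diagonal]
      by_cases h : lam j = 0
      · rw [hXVcol i j h, hsv j, h]
        simp
      · have hpos : 0 < lam j := lt_of_le_of_ne (hlam0 j) (Ne.symm h)
        have hs : Real.sqrt (lam j) ≠ 0 := by positivity
        have hone : g j * svals X j = 1 := by
          rw [hsv j]
          simp only [hg, if_neg h]
          field_simp
        rw [hone, mul_one]
    rw [h1, Matrix.mul_assoc, hVVt, Matrix.mul_one]
  have he01 : ∀ j, e j = 0 ∨ e j = 1 := by
    intro j; by_cases h : lam j = 0 <;> simp [he, h]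
  have hepos : ∀ j, svals X j ≠ 0 → e j = 1 := by
    intro j hj
    by_cases h : lam j = 0
    · exfalso; apply hj; rw [hsv j, h, Real.sqrt_zero]
    · simp [he, h]
  have hesum : (∑ j, e j) ≤ (s : ℝ) := by
    set M : Matrix (Fin s) (Fin s) ℝ := K * Kᵀ with hM
    have hMM : M * M = M := by
      rw [hM, Matrix.mul_assoc, ← Matrix.mul_assoc Kᵀ, hKtK, ← Matrix.mul_assoc, hKe]
    have hMsymm : Mᵀ = M := by
      rw [hM, Matrix.transpose_mul, Matrix.transpose_transpose]
    have hMdiag : ∀ i, M i i = ∑ k, (M i k)^2 := by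
      intro i
      conv_lhs => rw [← hMM]
      rw [Matrix.mul_apply]
      refine Finset.sum_congr rfl fun k _ => ?_
      have : M k i = M i k := by
        conv_lhs => rw [← hMsymm]
        rw [Matrix.transpose_apply]
      rw [this, pow_two]
    have hMle : ∀ i, M i i ≤ 1 := by
      intro i
      have h1 : (M i i)^2 ≤ ∑ k, (M i k)^2 :=
        Finset.single_le_sum (fun k _ => sq_nonneg (M i k)) (Finset.mem_univ i)
      have h2 : 0 ≤ ∑ k, (M i k)^2 := Finset.sum_nonneg fun k _ => sq_nonneg _
      have h3 := hMdiag i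
      nlinarith
    have h4 : ∑ j, e j = Matrix.trace (Kᵀ * K) := by
      rw [hKtK, Matrix.trace_diagonal]
    rw [h4, Matrix.trace_mul_comm, ← hM]
    calc Matrix.trace M = ∑ i, M i i := rfl
      _ ≤ ∑ i : Fin s, (1:ℝ) := Finset.sum_le_sum fun i _ => hMle i
      _ = (s : ℝ) := by simp
  exact ⟨K, V, e, hXdecomp, hKtK, hKe, he01, hepos, hVVt, hVtV, hesum⟩

/-- A diagonal bound for conjugation by a symmetric idempotent. -/
lemma vn_diag_bound {n p : ℕ} (K : Matrix (Fin n) (Fin p) ℝ) (e : Fin p → ℝ)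
    (hKtK : Kᵀ * K = diagonal e) (he : ∀ j, e j ≤ 1)
    (M : Matrix (Fin n) (Fin n) ℝ) (hMsym : Mᵀ = M) (hMM : M * M = M) (k : Fin p) :
    (Kᵀ * M * K) k k ≤ 1 := by
  set N : Matrix (Fin n) (Fin n) ℝ := 1 - M with hN
  have hNsym : Nᵀ = N := by
    rw [hN, Matrix.transpose_sub, Matrix.transpose_one, hMsym]
  have hNN : N * N = N := by
    rw [hN, Matrix.sub_mul, Matrix.mul_sub, Matrix.mul_sub, hMM]
    simp only [Matrix.one_mul, Matrix.mul_one]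
    abel
  have h0 : Kᵀ * N * K = (N * K)ᵀ * (N * K) := by
    calc Kᵀ * N * K = Kᵀ * (N * N) * K := by rw [hNN]
      _ = (N * K)ᵀ * (N * K) := by
          rw [Matrix.transpose_mul, hNsym]
          simp only [Matrix.mul_assoc]
  have h1 : 0 ≤ ((N * K)ᵀ * (N * K)) k k := by
    rw [Matrix.mul_apply]
    refine Finset.sum_nonneg fun i _ => ?_
    rw [Matrix.transpose_apply]
    exact mul_self_nonneg _
  have h2 : Kᵀ * N * K = Kᵀ * K - Kᵀ * M * K := by
    rw [hN, Matrix.mul_sub, Matrix.mul_one, Matrix.sub_mul]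
  have h3 : (Kᵀ * N * K) k k = e k - (Kᵀ * M * K) k k := by
    rw [h2, Matrix.sub_apply, hKtK, Matrix.diagonal_apply_eq]
  rw [h0] at h3
  have := he k
  linarith
end Aux

/-- von Neumann's trace inequality: `⟨X, Y⟩ = trace(Xᵀ Y) ≤ ∑_{i=1}^{min(s,t)} σ_i(X) σ_i(Y)`. -/
theorem von_neumann_trace_inequality {s t : ℕ} (X Y : Matrix (Fin s) (Fin t) ℝ) :
    ∑ i, ∑ j, X i j * Y i j ≤
      ∑ i : Fin (min s t),
        sdesc X (Fin.castLE (min_le_right s t) i) *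
          sdesc Y (Fin.castLE (min_le_right s t) i) := by
  classical
  obtain ⟨K, V, eX, hXdec, hKtK, hKe, heX01, heXpos, hVVt, hVtV, heXsum⟩ := svd_decomp X
  obtain ⟨L, W, eY, hYdec, hLtL, hLf, heY01, heYpos, hWWt, hWtW, heYsum⟩ := svd_decomp Y
  set σ : Fin t → ℝ := svals X with hσ
  set τ : Fin t → ℝ := svals Y with hτ
  have hσ0 : ∀ k, 0 ≤ σ k := fun k => Real.sqrt_nonneg _
  have hτ0 : ∀ k, 0 ≤ τ k := fun k => Real.sqrt_nonneg _
  have heX0 : ∀ j, 0 ≤ eX j := fun j => by rcases heX01 j with h | h <;> rw [h] <;> norm_num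
  have heY0 : ∀ j, 0 ≤ eY j := fun j => by rcases heY01 j with h | h <;> rw [h] <;> norm_num
  have heX1 : ∀ j, eX j ≤ 1 := fun j => by rcases heX01 j with h | h <;> rw [h] <;> norm_num
  have heY1 : ∀ j, eY j ≤ 1 := fun j => by rcases heY01 j with h | h <;> rw [h] <;> norm_num
  set P : Matrix (Fin t) (Fin t) ℝ := Kᵀ * L with hP
  set Q : Matrix (Fin t) (Fin t) ℝ := Vᵀ * W with hQ
  -- entry formulas
  have hXe : ∀ i j, X i j = ∑ k, K i k * σ k * V j k := by
    intro i j
    conv_lhs => rw [hXdec]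
    rw [Matrix.mul_apply]
    refine Finset.sum_congr rfl fun k _ => ?_
    rw [Matrix.mul_diagonal, Matrix.transpose_apply]
  have hYe : ∀ i j, Y i j = ∑ l, L i l * τ l * W j l := by
    intro i j
    conv_lhs => rw [hYdec]
    rw [Matrix.mul_apply]
    refine Finset.sum_congr rfl fun l _ => ?_
    rw [Matrix.mul_diagonal, Matrix.transpose_apply]
  -- the key identity
  have key : ∑ i, ∑ j, X i j * Y i j
      = ∑ k, ∑ l, σ k * τ l * (P k l * Q k l) := by
    have hPe : ∀ k l, P k l = ∑ i, K i k * L i l := by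
      intro k l
      rw [hP, Matrix.mul_apply]
      exact Finset.sum_congr rfl fun i _ => by rw [Matrix.transpose_apply]
    have hQe : ∀ k l, Q k l = ∑ j, V j k * W j l := by
      intro k l
      rw [hQ, Matrix.mul_apply]
      exact Finset.sum_congr rfl fun j _ => by rw [Matrix.transpose_apply]
    calc ∑ i, ∑ j, X i j * Y i j
        = ∑ i, ∑ j, ∑ k, ∑ l, (K i k * σ k * V j k) * (L i l * τ l * W j l) := by
          refine Finset.sum_congr rfl fun i _ => Finset.sum_congr rfl fun j _ => ?_
          rw [hXe i j, hYe i j, Finset.sum_mul_sum]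
      _ = ∑ i, ∑ k, ∑ j, ∑ l, (K i k * σ k * V j k) * (L i l * τ l * W j l) := by
          exact Finset.sum_congr rfl fun i _ => Finset.sum_comm
      _ = ∑ k, ∑ i, ∑ j, ∑ l, (K i k * σ k * V j k) * (L i l * τ l * W j l) :=
          Finset.sum_comm
      _ = ∑ k, ∑ i, ∑ l, ∑ j, (K i k * σ k * V j k) * (L i l * τ l * W j l) := by
          exact Finset.sum_congr rfl fun k _ => Finset.sum_congr rfl fun i _ =>
            Finset.sum_comm
      _ = ∑ k, ∑ l, ∑ i, ∑ j, (K i k * σ k * V j k) * (L i l * τ l * W j l) := by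
          exact Finset.sum_congr rfl fun k _ => Finset.sum_comm
      _ = ∑ k, ∑ l, σ k * τ l * (P k l * Q k l) := by
          refine Finset.sum_congr rfl fun k _ => Finset.sum_congr rfl fun l _ => ?_
          rw [hPe, hQe]
          calc ∑ i, ∑ j, (K i k * σ k * V j k) * (L i l * τ l * W j l)
              = ∑ i, (K i k * L i l * (σ k * τ l)) * ∑ j, V j k * W j l := by
                refine Finset.sum_congr rfl fun i _ => ?_
                rw [Finset.mul_sum]
                exact Finset.sum_congr rfl fun j _ => by ring
            _ = (∑ i, K i k * L i l) * (σ k * τ l) * ∑ j, V j k * W j l := by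
                rw [Finset.sum_mul, Finset.sum_mul]
            _ = σ k * τ l * ((∑ i, K i k * L i l) * ∑ j, V j k * W j l) := by ring
  -- bounds on squared row/column sums of P and Q
  have hMYsym : (L * Lᵀ)ᵀ = L * Lᵀ := by
    rw [Matrix.transpose_mul, Matrix.transpose_transpose]
  have hMYMM : (L * Lᵀ) * (L * Lᵀ) = L * Lᵀ := by
    calc (L * Lᵀ) * (L * Lᵀ) = L * (Lᵀ * L) * Lᵀ := by simp only [Matrix.mul_assoc]
      _ = (L * diagonal eY) * Lᵀ := by rw [hLtL, Matrix.mul_assoc]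
      _ = L * Lᵀ := by rw [hLf]
  have hMXsym : (K * Kᵀ)ᵀ = K * Kᵀ := by
    rw [Matrix.transpose_mul, Matrix.transpose_transpose]
  have hMXMM : (K * Kᵀ) * (K * Kᵀ) = K * Kᵀ := by
    calc (K * Kᵀ) * (K * Kᵀ) = K * (Kᵀ * K) * Kᵀ := by simp only [Matrix.mul_assoc]
      _ = (K * diagonal eX) * Kᵀ := by rw [hKtK, Matrix.mul_assoc]
      _ = K * Kᵀ := by rw [hKe]
  have hProw : ∀ k, ∑ l, (P k l)^2 ≤ 1 := by
    intro k
    have h1 : ∑ l, (P k l)^2 = (P * Pᵀ) k k := by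
      rw [Matrix.mul_apply]
      refine Finset.sum_congr rfl fun l _ => ?_
      rw [Matrix.transpose_apply, pow_two]
    have h2 : P * Pᵀ = Kᵀ * (L * Lᵀ) * K := by
      rw [hP, Matrix.transpose_mul, Matrix.transpose_transpose]
      simp only [Matrix.mul_assoc]
    rw [h1, h2]
    exact vn_diag_bound K eX hKtK heX1 (L * Lᵀ) hMYsym hMYMM k
  have hPcol : ∀ l, ∑ k, (P k l)^2 ≤ 1 := by
    intro l
    have h1 : ∑ k, (P k l)^2 = (Pᵀ * P) l l := by
      rw [Matrix.mul_apply]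
      refine Finset.sum_congr rfl fun k _ => ?_
      rw [Matrix.transpose_apply, pow_two]
    have h2 : Pᵀ * P = Lᵀ * (K * Kᵀ) * L := by
      rw [hP, Matrix.transpose_mul, Matrix.transpose_transpose]
      simp only [Matrix.mul_assoc]
    rw [h1, h2]
    exact vn_diag_bound L eY hLtL heY1 (K * Kᵀ) hMXsym hMXMM l
  have hQQt : Q * Qᵀ = 1 := by
    rw [hQ, Matrix.transpose_mul, Matrix.transpose_transpose]
    calc Vᵀ * W * (Wᵀ * V) = Vᵀ * (W * Wᵀ * V) := by simp only [Matrix.mul_assoc]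
      _ = Vᵀ * V := by rw [hWWt, Matrix.one_mul]
      _ = 1 := hVtV
  have hQtQ : Qᵀ * Q = 1 := by
    rw [hQ, Matrix.transpose_mul, Matrix.transpose_transpose]
    calc Wᵀ * V * (Vᵀ * W) = Wᵀ * (V * Vᵀ * W) := by simp only [Matrix.mul_assoc]
      _ = Wᵀ * W := by rw [hVVt, Matrix.one_mul]
      _ = 1 := hWtW
  have hQrow : ∀ k, ∑ l, (Q k l)^2 = 1 := by
    intro k
    have h1 : ∑ l, (Q k l)^2 = (Q * Qᵀ) k k := by
      rw [Matrix.mul_apply]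
      refine Finset.sum_congr rfl fun l _ => ?_
      rw [Matrix.transpose_apply, pow_two]
    rw [h1, hQQt, Matrix.one_apply_eq]
  have hQcol : ∀ l, ∑ k, (Q k l)^2 = 1 := by
    intro l
    have h1 : ∑ k, (Q k l)^2 = (Qᵀ * Q) l l := by
      rw [Matrix.mul_apply]
      refine Finset.sum_congr rfl fun k _ => ?_
      rw [Matrix.transpose_apply, pow_two]
    rw [h1, hQtQ, Matrix.one_apply_eq]
  -- the substochastic weight
  set Df : Fin t → Fin t → ℝ := fun k l => (((P k l)^2 + (Q k l)^2)/2) with hDf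
  have hDf0 : ∀ k l, 0 ≤ Df k l := fun k l => by positivity
  have hDfrow : ∀ k, ∑ l, Df k l ≤ 1 := by
    intro k
    rw [hDf]
    simp only
    rw [← Finset.sum_div, Finset.sum_add_distrib]
    have := hProw k
    have := hQrow k
    linarith
  have hDfcol : ∀ l, ∑ k, Df k l ≤ 1 := by
    intro l
    rw [hDf]
    simp only
    rw [← Finset.sum_div, Finset.sum_add_distrib]
    have := hPcol l
    have := hQcol l
    linarith
  have step2 : ∑ k, ∑ l, σ k * τ l * (P k l * Q k l)
      ≤ ∑ k, ∑ l, σ k * τ l * Df k l := by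
    refine Finset.sum_le_sum fun k _ => Finset.sum_le_sum fun l _ => ?_
    refine mul_le_mul_of_nonneg_left ?_ (mul_nonneg (hσ0 k) (hτ0 l))
    rw [hDf]
    nlinarith [sq_nonneg (P k l - Q k l)]
  -- sorting permutations
  set πX : Equiv.Perm (Fin t) := Fin.revPerm.trans (Tuple.sort σ) with hπX
  set πY : Equiv.Perm (Fin t) := Fin.revPerm.trans (Tuple.sort τ) with hπY
  have hsdX : ∀ i, sdesc X i = σ (πX i) := fun i => rfl
  have hsdY : ∀ i, sdesc Y i = τ (πY i) := fun i => rfl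
  have hantiX : Antitone (sdesc X) := by
    intro i j hij
    have hm := Tuple.monotone_sort σ
    exact hm (Fin.rev_le_rev.mpr hij)
  have hantiY : Antitone (sdesc Y) := by
    intro i j hij
    have hm := Tuple.monotone_sort τ
    exact hm (Fin.rev_le_rev.mpr hij)
  have hsdX0 : ∀ i, 0 ≤ sdesc X i := fun i => Real.sqrt_nonneg _
  have hsdY0 : ∀ i, 0 ≤ sdesc Y i := fun i => Real.sqrt_nonneg _
  -- tail vanishing
  have hXtail : ∀ i : Fin t, (s : ℕ) ≤ (i : ℕ) → sdesc X i = 0 := by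
    intro i hi
    by_contra hne
    have hpos : 0 < sdesc X i := lt_of_le_of_ne (hsdX0 i) (Ne.symm hne)
    have h1 : ∀ j : Fin t, j ≤ i → eX (πX j) = 1 := by
      intro j hj
      refine heXpos (πX j) ?_
      have : 0 < sdesc X j := lt_of_lt_of_le hpos (hantiX hj)
      rw [hsdX j] at this
      exact ne_of_gt this
    have h2 : ∑ j, eX (πX j) = ∑ j, eX j := Equiv.sum_comp πX eX
    have h3 : ∑ j ∈ Finset.Iic i, eX (πX j) ≤ ∑ j, eX (πX j) :=
      Finset.sum_le_sum_of_subset_of_nonneg (Finset.subset_univ _)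
        (fun j _ _ => heX0 (πX j))
    have h4 : ∑ j ∈ Finset.Iic i, eX (πX j) = ((i : ℕ) + 1 : ℝ) := by
      rw [Finset.sum_congr rfl (fun j hj => h1 j (Finset.mem_Iic.mp hj))]
      rw [Finset.sum_const, Fin.card_Iic]
      simp
    have h5 : ((i : ℕ) + 1 : ℝ) ≤ (s : ℝ) := by
      rw [← h4]
      calc ∑ j ∈ Finset.Iic i, eX (πX j) ≤ ∑ j, eX (πX j) := h3
        _ = ∑ j, eX j := h2
        _ ≤ (s : ℝ) := heXsum
    have h6 : (s : ℝ) ≤ ((i : ℕ) : ℝ) := by exact_mod_cast Nat.cast_le.mpr hi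
    linarith
  -- reindex by the sorting permutations
  have step3 : ∑ k, ∑ l, σ k * τ l * Df k l
      = ∑ k, ∑ l, sdesc X k * sdesc Y l * Df (πX k) (πY l) := by
    rw [← Equiv.sum_comp πX (fun k => ∑ l, σ k * τ l * Df k l)]
    refine Finset.sum_congr rfl fun k _ => ?_
    rw [← Equiv.sum_comp πY (fun l => σ (πX k) * τ l * Df (πX k) l)]
    refine Finset.sum_congr rfl fun l _ => ?_
    rw [hsdX k, hsdY l]
  -- lift to ℕ-indexed sums
  set an : ℕ → ℝ := fun j => if h : j < t then sdesc X ⟨j, h⟩ else 0 with han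
  set bn : ℕ → ℝ := fun j => if h : j < t then sdesc Y ⟨j, h⟩ else 0 with hbn
  set Dn : ℕ → ℕ → ℝ := fun k l =>
    if hk : k < t then if hl : l < t then Df (πX ⟨k, hk⟩) (πY ⟨l, hl⟩) else 0 else 0
    with hDn
  have han0 : ∀ j, 0 ≤ an j := by
    intro j; rw [han]; dsimp only
    split
    · exact hsdX0 _
    · exact le_refl 0
  have hbn0 : ∀ j, 0 ≤ bn j := by
    intro j; rw [hbn]; dsimp only
    split
    · exact hsdY0 _
    · exact le_refl 0
  have hanti_an : Antitone an := by
    intro x y hxy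
    rw [han]; dsimp only
    split
    · rename_i hy
      have hx : x < t := lt_of_le_of_lt hxy hy
      rw [dif_pos hx]
      exact hantiX (Fin.mk_le_mk.mpr hxy)
    · exact han0 x
  have hanti_bn : Antitone bn := by
    intro x y hxy
    rw [hbn]; dsimp only
    split
    · rename_i hy
      have hx : x < t := lt_of_le_of_lt hxy hy
      rw [dif_pos hx]
      exact hantiY (Fin.mk_le_mk.mpr hxy)
    · exact hbn0 x
  have hDn0 : ∀ k l, 0 ≤ Dn k l := by
    intro k l
    rw [hDn]; dsimp only
    split
    · split
      · exact hDf0 _ _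
      · exact le_refl 0
    · exact le_refl 0
  have hDnrow : ∀ k, ∑ l ∈ Finset.range t, Dn k l ≤ 1 := by
    intro k
    by_cases hk : k < t
    · have h1 : ∑ l ∈ Finset.range t, Dn k l = ∑ l : Fin t, Df (πX ⟨k, hk⟩) (πY l) := by
        rw [← Fin.sum_univ_eq_sum_range (fun l => Dn k l) t]
        refine Finset.sum_congr rfl fun l _ => ?_
        rw [hDn]; dsimp only
        rw [dif_pos hk, dif_pos l.isLt]
      rw [h1, Equiv.sum_comp πY (fun l => Df (πX ⟨k, hk⟩) l)]
      exact hDfrow _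
    · have h1 : ∑ l ∈ Finset.range t, Dn k l = 0 := by
        refine Finset.sum_eq_zero fun l _ => ?_
        rw [hDn]; dsimp only
        rw [dif_neg hk]
      rw [h1]; norm_num
  have hDncol : ∀ l, ∑ k ∈ Finset.range t, Dn k l ≤ 1 := by
    intro l
    by_cases hl : l < t
    · have h1 : ∑ k ∈ Finset.range t, Dn k l = ∑ k : Fin t, Df (πX k) (πY ⟨l, hl⟩) := by
        rw [← Fin.sum_univ_eq_sum_range (fun k => Dn k l) t]
        refine Finset.sum_congr rfl fun k _ => ?_
        rw [hDn]; dsimp only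
        rw [dif_pos k.isLt, dif_pos hl]
      rw [h1, Equiv.sum_comp πX (fun k => Df k (πY ⟨l, hl⟩))]
      exact hDfcol _
    · have h1 : ∑ k ∈ Finset.range t, Dn k l = 0 := by
        refine Finset.sum_eq_zero fun k _ => ?_
        rw [hDn]; dsimp only
        rw [dif_pos (Finset.mem_range.mp ‹k ∈ Finset.range t›), dif_neg hl]
      rw [h1]; norm_num
  have hfin : ∑ k : Fin t, ∑ l : Fin t, sdesc X k * sdesc Y l * Df (πX k) (πY l)
      = ∑ k ∈ Finset.range t, ∑ l ∈ Finset.range t, an k * bn l * Dn k l := by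
    rw [← Fin.sum_univ_eq_sum_range (fun k => ∑ l ∈ Finset.range t, an k * bn l * Dn k l) t]
    refine Finset.sum_congr rfl fun k _ => ?_
    rw [← Fin.sum_univ_eq_sum_range (fun l => an ↑k * bn l * Dn ↑k l) t]
    refine Finset.sum_congr rfl fun l _ => ?_
    rw [han, hbn, hDn]; dsimp only
    rw [dif_pos k.isLt, dif_pos l.isLt, dif_pos k.isLt, dif_pos l.isLt]
  have hcore := vn_core t an bn Dn hanti_an hanti_bn han0 hbn0 hDn0 hDnrow hDncol
  -- final truncation of the diagonal sum
  have hm : min s t ≤ t := min_le_right s t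
  have htail : ∑ j ∈ Finset.range t, an j * bn j
      = ∑ i : Fin (min s t),
          sdesc X (Fin.castLE (min_le_right s t) i) *
            sdesc Y (Fin.castLE (min_le_right s t) i) := by
    rw [Finset.range_eq_Ico, ← Finset.sum_Ico_consecutive _ (Nat.zero_le (min s t)) hm]
    have tail0 : ∑ j ∈ Finset.Ico (min s t) t, an j * bn j = 0 := by
      refine Finset.sum_eq_zero fun j hj => ?_
      rw [Finset.mem_Ico] at hj
      have hjs : s ≤ j := by omega
      have hjt : j < t := hj.2
      rw [han]; dsimp only
      rw [dif_pos hjt, hXtail ⟨j, hjt⟩ hjs, zero_mul]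
    rw [tail0, add_zero, ← Finset.range_eq_Ico,
      ← Fin.sum_univ_eq_sum_range (fun j => an j * bn j) (min s t)]
    refine Finset.sum_congr rfl fun i _ => ?_
    have hit : (i : ℕ) < t := lt_of_lt_of_le i.isLt hm
    rw [han, hbn]; dsimp only
    rw [dif_pos hit, dif_pos hit]
    rfl
  calc ∑ i, ∑ j, X i j * Y i j
      = ∑ k, ∑ l, σ k * τ l * (P k l * Q k l) := key
    _ ≤ ∑ k, ∑ l, σ k * τ l * Df k l := step2
    _ = ∑ k, ∑ l, sdesc X k * sdesc Y l * Df (πX k) (πY l) := step3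
    _ = ∑ k ∈ Finset.range t, ∑ l ∈ Finset.range t, an k * bn l * Dn k l := hfin
    _ ≤ ∑ j ∈ Finset.range t, an j * bn j := hcore
    _ = ∑ i : Fin (min s t),
          sdesc X (Fin.castLE (min_le_right s t) i) *
            sdesc Y (Fin.castLE (min_le_right s t) i) := htail
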